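/- Let r₁, r₂, r₃ > 0 with r₁² + r₂² + r₃² = 1, and set a₁ = a₂ = −r₁²/(r₂²+r₃²), b₁ = r₁r₃/(r₂(r₂²+r₃²)), b₂ = −r₁r₂/(r₃(r₂²+r₃²)). Then the map r : ℝ² → ℂ³ defined by r(x,y) = (r₁ e^{2πi x}, r₂ e^{2πi(a₁x+b₁y)}, r₃ e^{2πi(a₂x+b₂y)}) satisfies, for all (x,y): ⟨r,r⟩ = 1, ⟨r_x,r⟩ = ⟨r_y,r⟩ = ⟨r_x,r_y⟩ = 0, and ⟨r_x,r_x⟩ = ⟨r_y,r_y⟩ = 4π²r₁²/(r₂²+r₃²). -/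

import Mathlib

open Complex Real

/-- Partial derivative in the first variable. -/
noncomputable def pdx {E : Type*} [NormedAddCommGroup E] [NormedSpace ℝ E]
    (f : ℝ → ℝ → E) (x y : ℝ) : E := deriv (fun x' => f x' y) x

/-- Partial derivative in the second variable. -/
noncomputable def pdy {E : Type*} [NormedAddCommGroup E] [NormedSpace ℝ E]
    (f : ℝ → ℝ → E) (x y : ℝ) : E := deriv (fun y' => f x y') y

/-- Hermitian inner product ⟨a,b⟩ = ∑ aᵢ conj(bᵢ) on ℂ³. -/
noncomputable def herm (a b : Fin 3 → ℂ) : ℂ := ∑ i, a i * starRingEnd ℂ (b i)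

lemma liftDeriv (A c d : ℂ) (t : ℝ) :
    HasDerivAt (fun s : ℝ => A * Complex.exp ((c * s + d) * Complex.I))
      (A * (c * Complex.I) * Complex.exp ((c * t + d) * Complex.I)) t := by
  have h0 : HasDerivAt (fun s : ℝ => (s : ℂ)) 1 t := (hasDerivAt_id t).ofReal_comp
  have h1 : HasDerivAt (fun s : ℝ => (c * s + d) * Complex.I) (c * Complex.I) t := by
    simpa using ((h0.const_mul c).add_const d).mul_const Complex.I
  simpa [mul_comm, mul_assoc, mul_left_comm] using h1.cexp.const_mul A

lemma cancel (A B θ : ℂ) (h : starRingEnd ℂ θ = -θ) :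
    A * Complex.exp θ * starRingEnd ℂ (B * Complex.exp θ) = A * starRingEnd ℂ B := by
  rw [map_mul, ← Complex.exp_conj, h, mul_mul_mul_comm, ← Complex.exp_add, add_neg_cancel,
    Complex.exp_zero, mul_one]

/-- The map `r(x,y) = (r₁e^{2πix}, r₂e^{2πi(a₁x+b₁y)}, r₃e^{2πi(a₂x+b₂y)})` is a
horizontal conformal lift of the homogeneous torus `Σ_{r₁,r₂,r₃}`:
`⟨r,r⟩ = 1`, `⟨r_x,r⟩ = ⟨r_y,r⟩ = ⟨r_x,r_y⟩ = 0`, and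
`⟨r_x,r_x⟩ = ⟨r_y,r_y⟩ = 4π²r₁²/(r₂²+r₃²)`. -/
theorem homogeneous_torus_lift_is_horizontal_conformal
    (r1 r2 r3 : ℝ) (h1 : 0 < r1) (h2 : 0 < r2) (h3 : 0 < r3)
    (hsum : r1^2 + r2^2 + r3^2 = 1)
    (a1 a2 b1 b2 : ℝ)
    (ha1 : a1 = -r1^2 / (r2^2 + r3^2))
    (ha2 : a2 = -r1^2 / (r2^2 + r3^2))
    (hb1 : b1 = r1 * r3 / (r2 * (r2^2 + r3^2)))
    (hb2 : b2 = -(r1 * r2) / (r3 * (r2^2 + r3^2)))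
    (r : ℝ → ℝ → Fin 3 → ℂ)
    (hr : ∀ x y, r x y =
      ![(r1 : ℂ) * Complex.exp (2 * Real.pi * x * Complex.I),
        (r2 : ℂ) * Complex.exp (2 * Real.pi * (a1 * x + b1 * y) * Complex.I),
        (r3 : ℂ) * Complex.exp (2 * Real.pi * (a2 * x + b2 * y) * Complex.I)]) :
    ∀ x y,
      herm (r x y) (r x y) = 1 ∧
      herm (pdx r x y) (r x y) = 0 ∧
      herm (pdy r x y) (r x y) = 0 ∧
      herm (pdx r x y) (pdy r x y) = 0 ∧
      herm (pdx r x y) (pdx r x y) =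
        ((4 * Real.pi^2 * r1^2 / (r2^2 + r3^2) : ℝ) : ℂ) ∧
      herm (pdy r x y) (pdy r x y) =
        ((4 * Real.pi^2 * r1^2 / (r2^2 + r3^2) : ℝ) : ℂ) := by
  intro x y
  -- rewriting the exponents into the canonical form `(c * t + d) * I`
  have E1 : ∀ t : ℝ, 2 * (Real.pi : ℂ) * (t : ℂ) * Complex.I
      = ((2 * (Real.pi : ℂ)) * (t : ℂ) + 0) * Complex.I := fun t => by ring
  have E2 : ∀ t s : ℝ, 2 * (Real.pi : ℂ) * ((a1 : ℂ) * (t : ℂ) + (b1 : ℂ) * (s : ℂ)) * Complex.I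
      = ((2 * (Real.pi : ℂ) * (a1 : ℂ)) * (t : ℂ) + 2 * (Real.pi : ℂ) * (b1 : ℂ) * (s : ℂ)) * Complex.I :=
    fun t s => by ring
  have E3 : ∀ t s : ℝ, 2 * (Real.pi : ℂ) * ((a2 : ℂ) * (t : ℂ) + (b2 : ℂ) * (s : ℂ)) * Complex.I
      = ((2 * (Real.pi : ℂ) * (a2 : ℂ)) * (t : ℂ) + 2 * (Real.pi : ℂ) * (b2 : ℂ) * (s : ℂ)) * Complex.I :=
    fun t s => by ring
  have E2' : ∀ s : ℝ, 2 * (Real.pi : ℂ) * ((a1 : ℂ) * (x : ℂ) + (b1 : ℂ) * (s : ℂ)) * Complex.I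
      = ((2 * (Real.pi : ℂ) * (b1 : ℂ)) * (s : ℂ) + 2 * (Real.pi : ℂ) * (a1 : ℂ) * (x : ℂ)) * Complex.I :=
    fun s => by ring
  have E3' : ∀ s : ℝ, 2 * (Real.pi : ℂ) * ((a2 : ℂ) * (x : ℂ) + (b2 : ℂ) * (s : ℂ)) * Complex.I
      = ((2 * (Real.pi : ℂ) * (b2 : ℂ)) * (s : ℂ) + 2 * (Real.pi : ℂ) * (a2 : ℂ) * (x : ℂ)) * Complex.I :=
    fun s => by ring
  have F2 : ((2 * (Real.pi : ℂ) * (b1 : ℂ)) * (y : ℂ) + 2 * (Real.pi : ℂ) * (a1 : ℂ) * (x : ℂ)) * Complex.I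
      = ((2 * (Real.pi : ℂ) * (a1 : ℂ)) * (x : ℂ) + 2 * (Real.pi : ℂ) * (b1 : ℂ) * (y : ℂ)) * Complex.I := by ring
  have F3 : ((2 * (Real.pi : ℂ) * (b2 : ℂ)) * (y : ℂ) + 2 * (Real.pi : ℂ) * (a2 : ℂ) * (x : ℂ)) * Complex.I
      = ((2 * (Real.pi : ℂ) * (a2 : ℂ)) * (x : ℂ) + 2 * (Real.pi : ℂ) * (b2 : ℂ) * (y : ℂ)) * Complex.I := by ring
  have hrC : r x y =
      ![(r1 : ℂ) * Complex.exp (((2 * (Real.pi : ℂ)) * (x : ℂ) + 0) * Complex.I),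
        (r2 : ℂ) * Complex.exp (((2 * (Real.pi : ℂ) * (a1 : ℂ)) * (x : ℂ) + 2 * (Real.pi : ℂ) * (b1 : ℂ) * (y : ℂ)) * Complex.I),
        (r3 : ℂ) * Complex.exp (((2 * (Real.pi : ℂ) * (a2 : ℂ)) * (x : ℂ) + 2 * (Real.pi : ℂ) * (b2 : ℂ) * (y : ℂ)) * Complex.I)] := by
    rw [hr, E1, E2, E3]
  have hrx : HasDerivAt (fun x' => r x' y)
      (![(r1 : ℂ) * ((2 * (Real.pi : ℂ)) * Complex.I) * Complex.exp (((2 * (Real.pi : ℂ)) * (x : ℂ) + 0) * Complex.I),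
        (r2 : ℂ) * ((2 * (Real.pi : ℂ) * (a1 : ℂ)) * Complex.I) * Complex.exp (((2 * (Real.pi : ℂ) * (a1 : ℂ)) * (x : ℂ) + 2 * (Real.pi : ℂ) * (b1 : ℂ) * (y : ℂ)) * Complex.I),
        (r3 : ℂ) * ((2 * (Real.pi : ℂ) * (a2 : ℂ)) * Complex.I) * Complex.exp (((2 * (Real.pi : ℂ) * (a2 : ℂ)) * (x : ℂ) + 2 * (Real.pi : ℂ) * (b2 : ℂ) * (y : ℂ)) * Complex.I)]) x := by
    have hfun : (fun x' => r x' y) = fun x' : ℝ =>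
        ![(r1 : ℂ) * Complex.exp (((2 * (Real.pi : ℂ)) * (x' : ℂ) + 0) * Complex.I),
          (r2 : ℂ) * Complex.exp (((2 * (Real.pi : ℂ) * (a1 : ℂ)) * (x' : ℂ) + 2 * (Real.pi : ℂ) * (b1 : ℂ) * (y : ℂ)) * Complex.I),
          (r3 : ℂ) * Complex.exp (((2 * (Real.pi : ℂ) * (a2 : ℂ)) * (x' : ℂ) + 2 * (Real.pi : ℂ) * (b2 : ℂ) * (y : ℂ)) * Complex.I)] := by
      funext x'; rw [hr, E1, E2, E3]
    rw [hfun]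
    apply hasDerivAt_pi.2
    intro i
    fin_cases i
    · exact liftDeriv (r1 : ℂ) (2 * (Real.pi : ℂ)) 0 x
    · exact liftDeriv (r2 : ℂ) (2 * (Real.pi : ℂ) * (a1 : ℂ)) (2 * (Real.pi : ℂ) * (b1 : ℂ) * (y : ℂ)) x
    · exact liftDeriv (r3 : ℂ) (2 * (Real.pi : ℂ) * (a2 : ℂ)) (2 * (Real.pi : ℂ) * (b2 : ℂ) * (y : ℂ)) x
  have hry : HasDerivAt (fun y' => r x y')
      (![0,
        (r2 : ℂ) * ((2 * (Real.pi : ℂ) * (b1 : ℂ)) * Complex.I) * Complex.exp (((2 * (Real.pi : ℂ) * (a1 : ℂ)) * (x : ℂ) + 2 * (Real.pi : ℂ) * (b1 : ℂ) * (y : ℂ)) * Complex.I),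
        (r3 : ℂ) * ((2 * (Real.pi : ℂ) * (b2 : ℂ)) * Complex.I) * Complex.exp (((2 * (Real.pi : ℂ) * (a2 : ℂ)) * (x : ℂ) + 2 * (Real.pi : ℂ) * (b2 : ℂ) * (y : ℂ)) * Complex.I)]) y := by
    have hfun : (fun y' => r x y') = fun y' : ℝ =>
        ![(r1 : ℂ) * Complex.exp (((2 * (Real.pi : ℂ)) * (x : ℂ) + 0) * Complex.I),
          (r2 : ℂ) * Complex.exp (((2 * (Real.pi : ℂ) * (b1 : ℂ)) * (y' : ℂ) + 2 * (Real.pi : ℂ) * (a1 : ℂ) * (x : ℂ)) * Complex.I),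
          (r3 : ℂ) * Complex.exp (((2 * (Real.pi : ℂ) * (b2 : ℂ)) * (y' : ℂ) + 2 * (Real.pi : ℂ) * (a2 : ℂ) * (x : ℂ)) * Complex.I)] := by
      funext y'; rw [hr, E1, E2', E3']
    rw [hfun]
    apply hasDerivAt_pi.2
    intro i
    fin_cases i
    · exact hasDerivAt_const y _
    · have := liftDeriv (r2 : ℂ) (2 * (Real.pi : ℂ) * (b1 : ℂ)) (2 * (Real.pi : ℂ) * (a1 : ℂ) * (x : ℂ)) y
      rw [F2] at this; exact this
    · have := liftDeriv (r3 : ℂ) (2 * (Real.pi : ℂ) * (b2 : ℂ)) (2 * (Real.pi : ℂ) * (a2 : ℂ) * (x : ℂ)) y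
      rw [F3] at this; exact this
  have hpdx : pdx r x y = _ := hrx.deriv
  have hpdy : pdy r x y = _ := hry.deriv
  -- conjugation facts for the exponents
  have hc : ∀ θ : ℂ, starRingEnd ℂ θ = θ → starRingEnd ℂ (θ * Complex.I) = -(θ * Complex.I) := by
    intro θ hθ; rw [map_mul, hθ, Complex.conj_I, mul_neg]
  have hc1 : starRingEnd ℂ (((2 * (Real.pi : ℂ)) * (x : ℂ) + 0) * Complex.I)
      = -(((2 * (Real.pi : ℂ)) * (x : ℂ) + 0) * Complex.I) := by
    apply hc; simp [map_mul, map_add, map_ofNat, Complex.conj_ofReal]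
  have hc2 : starRingEnd ℂ (((2 * (Real.pi : ℂ) * (a1 : ℂ)) * (x : ℂ) + 2 * (Real.pi : ℂ) * (b1 : ℂ) * (y : ℂ)) * Complex.I)
      = -(((2 * (Real.pi : ℂ) * (a1 : ℂ)) * (x : ℂ) + 2 * (Real.pi : ℂ) * (b1 : ℂ) * (y : ℂ)) * Complex.I) := by
    apply hc; simp [map_mul, map_add, map_ofNat, Complex.conj_ofReal]
  have hc3 : starRingEnd ℂ (((2 * (Real.pi : ℂ) * (a2 : ℂ)) * (x : ℂ) + 2 * (Real.pi : ℂ) * (b2 : ℂ) * (y : ℂ)) * Complex.I)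
      = -(((2 * (Real.pi : ℂ) * (a2 : ℂ)) * (x : ℂ) + 2 * (Real.pi : ℂ) * (b2 : ℂ) * (y : ℂ)) * Complex.I) := by
    apply hc; simp [map_mul, map_add, map_ofNat, Complex.conj_ofReal]
  -- arithmetic setup
  have hs0 : (0:ℝ) < r2^2 + r3^2 := by positivity
  have hsC : ((r2:ℂ))^2 + (r3:ℂ)^2 ≠ 0 := by
    have : ((r2^2 + r3^2 : ℝ) : ℂ) ≠ 0 := by exact_mod_cast hs0.ne'
    push_cast at this; exact this
  have hsumC : (r1:ℂ)^2 + (r2:ℂ)^2 + (r3:ℂ)^2 = 1 := by exact_mod_cast hsum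
  have hs : ((r2:ℂ))^2 + (r3:ℂ)^2 = 1 - (r1:ℂ)^2 := by linear_combination hsumC
  have h1s : (1:ℂ) - (r1:ℂ)^2 ≠ 0 := hs ▸ hsC
  have h2C : (r2:ℂ) ≠ 0 := by exact_mod_cast h2.ne'
  have h3C : (r3:ℂ) ≠ 0 := by exact_mod_cast h3.ne'
  refine ⟨?_, ?_, ?_, ?_, ?_, ?_⟩
  · rw [hrC]
    simp only [herm, Fin.sum_univ_three, Matrix.cons_val_zero, Matrix.cons_val_one,
      Matrix.cons_val_two, Matrix.head_cons, Matrix.tail_cons]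
    rw [cancel _ _ _ hc1, cancel _ _ _ hc2, cancel _ _ _ hc3]
    simp only [Complex.conj_ofReal]
    linear_combination hsumC
  · rw [hpdx, hrC]
    simp only [herm, Fin.sum_univ_three, Matrix.cons_val_zero, Matrix.cons_val_one,
      Matrix.cons_val_two, Matrix.head_cons, Matrix.tail_cons]
    rw [cancel _ _ _ hc1, cancel _ _ _ hc2, cancel _ _ _ hc3]
    simp only [Complex.conj_ofReal]
    rw [ha1, ha2]
    push_cast
    rw [hs]
    field_simp
    linear_combination (-(2*(Real.pi:ℂ)*Complex.I*(r1:ℂ)^2)) * hsumC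
  · rw [hpdy, hrC]
    simp only [herm, Fin.sum_univ_three, Matrix.cons_val_zero, Matrix.cons_val_one,
      Matrix.cons_val_two, Matrix.head_cons, Matrix.tail_cons]
    rw [cancel _ _ _ hc2, cancel _ _ _ hc3]
    simp only [Complex.conj_ofReal, zero_mul, zero_add]
    rw [hb1, hb2]
    push_cast
    rw [hs]
    field_simp
    ring
  · rw [hpdx, hpdy]
    simp only [herm, Fin.sum_univ_three, Matrix.cons_val_zero, Matrix.cons_val_one,
      Matrix.cons_val_two, Matrix.head_cons, Matrix.tail_cons]
    rw [cancel _ _ _ hc2, cancel _ _ _ hc3]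
    simp only [map_zero, mul_zero, map_mul, map_ofNat, Complex.conj_ofReal, Complex.conj_I, zero_add]
    rw [ha1, ha2, hb1, hb2]
    push_cast
    rw [hs]
    field_simp
    ring
  · rw [hpdx]
    simp only [herm, Fin.sum_univ_three, Matrix.cons_val_zero, Matrix.cons_val_one,
      Matrix.cons_val_two, Matrix.head_cons, Matrix.tail_cons]
    rw [cancel _ _ _ hc1, cancel _ _ _ hc2, cancel _ _ _ hc3]
    simp only [map_mul, map_ofNat, Complex.conj_ofReal, Complex.conj_I]
    rw [ha1, ha2]
    push_cast
    rw [hs]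
    field_simp
    ring_nf
    simp only [Complex.I_sq]
    linear_combination (4*(r1:ℂ)^4) * hs
  · rw [hpdy]
    simp only [herm, Fin.sum_univ_three, Matrix.cons_val_zero, Matrix.cons_val_one,
      Matrix.cons_val_two, Matrix.head_cons, Matrix.tail_cons]
    rw [cancel _ _ _ hc2, cancel _ _ _ hc3]
    simp only [map_zero, mul_zero, zero_mul, map_mul, map_ofNat, Complex.conj_ofReal,
      Complex.conj_I, zero_add]
    rw [hb1, hb2]
    push_cast
    rw [hs]
    field_simp
    ring_nf
    simp only [Complex.I_sq]
    linear_combination (4*(r1:ℂ)^2) * hs
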